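/- Let λ, μ be C¹ and φ be C² on an open subset of (0,∞)×ℝ, and suppose the wave equation (W) and the field equations (E1), (E2) hold there. Define D⁺ = e^{−μ}∂_t + e^{−λ}∂_r, D⁻ = e^{−μ}∂_t − e^{−λ}∂_r, X₂ = φ̇ − e^{μ−λ}φ′, Y₂ = φ̇ + e^{μ−λ}φ′. Then D⁺X₂ = e^{μ}[k/t − 4πt(ρ−p)]X₂ − (e^{−μ}/t)Y₂ and D⁻Y₂ = −(e^{−μ}/t)X₂ + e^{μ}[k/t − 4πt(ρ−p)]Y₂. -/

import Mathlib

open Real MeasureTheory Set Filter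

noncomputable section

/-- Partial derivative with respect to the first (time) variable. -/
def pt (u : ℝ → ℝ → ℝ) (t r : ℝ) : ℝ := deriv (fun s => u s r) t

/-- Partial derivative with respect to the second (space) variable. -/
def pr (u : ℝ → ℝ → ℝ) (t r : ℝ) : ℝ := deriv (fun s => u t s) r

/-- Second partial derivative in time. -/
def ptt (u : ℝ → ℝ → ℝ) (t r : ℝ) : ℝ := deriv (fun s => pt u s r) t

/-- Second partial derivative in space. -/
def prr (u : ℝ → ℝ → ℝ) (t r : ℝ) : ℝ := deriv (fun s => pr u t s) r

/-- Vlasov contribution to the energy density. -/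
def vRho (f : ℝ → ℝ → ℝ → ℝ → ℝ) (t r : ℝ) : ℝ :=
  (π / t ^ 2) * ∫ w : ℝ, ∫ F in Ioi (0 : ℝ), Real.sqrt (1 + w ^ 2 + F / t ^ 2) * f t r w F

/-- Vlasov contribution to the radial pressure. -/
def vP (f : ℝ → ℝ → ℝ → ℝ → ℝ) (t r : ℝ) : ℝ :=
  (π / t ^ 2) * ∫ w : ℝ, ∫ F in Ioi (0 : ℝ),
    (w ^ 2 / Real.sqrt (1 + w ^ 2 + F / t ^ 2)) * f t r w F

/-- Vlasov contribution to the momentum density. -/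
def vJ (f : ℝ → ℝ → ℝ → ℝ → ℝ) (t r : ℝ) : ℝ :=
  (π / t ^ 2) * ∫ w : ℝ, ∫ F in Ioi (0 : ℝ), w * f t r w F

/-- Energy density ρ of the Einstein-Vlasov-scalar field system. -/
def rho (f : ℝ → ℝ → ℝ → ℝ → ℝ) (lam mu phi : ℝ → ℝ → ℝ) (t r : ℝ) : ℝ :=
  vRho f t r + (1 / 2) * (Real.exp (-(2 * mu t r)) * (pt phi t r) ^ 2
    + Real.exp (-(2 * lam t r)) * (pr phi t r) ^ 2)

/-- Radial pressure p of the Einstein-Vlasov-scalar field system. -/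
def pres (f : ℝ → ℝ → ℝ → ℝ → ℝ) (lam mu phi : ℝ → ℝ → ℝ) (t r : ℝ) : ℝ :=
  vP f t r + (1 / 2) * (Real.exp (-(2 * mu t r)) * (pt phi t r) ^ 2
    + Real.exp (-(2 * lam t r)) * (pr phi t r) ^ 2)

/-- Momentum density j of the Einstein-Vlasov-scalar field system. -/
def mom (f : ℝ → ℝ → ℝ → ℝ → ℝ) (lam mu phi : ℝ → ℝ → ℝ) (t r : ℝ) : ℝ :=
  vJ f t r - Real.exp (-(lam t r + mu t r)) * pt phi t r * pr phi t r

/-- A regular solution of the surface-symmetric Einstein-Vlasov-scalar field system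
with curvature parameter `k` on the time interval `I ⊆ (0,∞)`. -/
structure IsRegularSolution (k : ℝ) (f : ℝ → ℝ → ℝ → ℝ → ℝ) (lam mu phi : ℝ → ℝ → ℝ)
    (I : Set ℝ) : Prop where
  f_contDiff : ContDiffOn ℝ 1 (fun q : ℝ × ℝ × ℝ × ℝ => f q.1 q.2.1 q.2.2.1 q.2.2.2)
    {q : ℝ × ℝ × ℝ × ℝ | q.1 ∈ I ∧ 0 ≤ q.2.2.2}
  f_nonneg : ∀ t ∈ I, ∀ (r w F : ℝ), 0 ≤ f t r w F
  f_periodic : ∀ (t r w F : ℝ), f t (r + 1) w F = f t r w F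
  supp_bounded : ∀ a ∈ I, ∀ b ∈ I, ∃ C : ℝ, ∀ t ∈ Icc a b, ∀ (r w F : ℝ),
    f t r w F ≠ 0 → |w| ≤ C ∧ F ≤ C
  lam_contDiff : ContDiffOn ℝ 1 (fun q : ℝ × ℝ => lam q.1 q.2) (I ×ˢ (univ : Set ℝ))
  mu_contDiff : ContDiffOn ℝ 2 (fun q : ℝ × ℝ => mu q.1 q.2) (I ×ˢ (univ : Set ℝ))
  phi_contDiff : ContDiffOn ℝ 2 (fun q : ℝ × ℝ => phi q.1 q.2) (I ×ˢ (univ : Set ℝ))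
  lam_periodic : ∀ (t r : ℝ), lam t (r + 1) = lam t r
  mu_periodic : ∀ (t r : ℝ), mu t (r + 1) = mu t r
  phi_periodic : ∀ (t r : ℝ), phi t (r + 1) = phi t r
  /-- (V): the Vlasov equation. -/
  eqV : ∀ t ∈ I, ∀ (r w F : ℝ), 0 ≤ F →
    deriv (fun s => f s r w F) t
      + (Real.exp (mu t r - lam t r) * w / Real.sqrt (1 + w ^ 2 + F / t ^ 2))
          * deriv (fun s => f t s w F) r
      - (pt lam t r * w + Real.exp (mu t r - lam t r) * pr mu t r
          * Real.sqrt (1 + w ^ 2 + F / t ^ 2)) * deriv (fun s => f t r s F) w = 0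
  /-- (E1). -/
  eqE1 : ∀ t ∈ I, ∀ r : ℝ,
    Real.exp (-(2 * mu t r)) * (2 * t * pt lam t r + 1) + k
      = 8 * π * t ^ 2 * rho f lam mu phi t r
  /-- (E2). -/
  eqE2 : ∀ t ∈ I, ∀ r : ℝ,
    Real.exp (-(2 * mu t r)) * (2 * t * pt mu t r - 1) - k
      = 8 * π * t ^ 2 * pres f lam mu phi t r
  /-- (E3). -/
  eqE3 : ∀ t ∈ I, ∀ r : ℝ,
    pr mu t r = -(4 * π * t) * Real.exp (lam t r + mu t r) * mom f lam mu phi t r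
  /-- (W): the wave equation for the scalar field. -/
  eqW : ∀ t ∈ I, ∀ r : ℝ,
    Real.exp (-(2 * lam t r)) * prr phi t r - Real.exp (-(2 * mu t r)) * ptt phi t r
      - Real.exp (-(2 * mu t r)) * (pt lam t r - pt mu t r + 2 / t) * pt phi t r
      - Real.exp (-(2 * lam t r)) * (pr lam t r - pr mu t r) * pr phi t r = 0

/-- Admissible initial data at `t = 1` for the surface-symmetric
Einstein-Vlasov-scalar field system. -/
structure IsInitialData (f0 : ℝ → ℝ → ℝ → ℝ) (lam0 mu0 phi0 psi : ℝ → ℝ) : Prop where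
  f0_contDiff : ContDiffOn ℝ 1 (fun q : ℝ × ℝ × ℝ => f0 q.1 q.2.1 q.2.2)
    {q : ℝ × ℝ × ℝ | 0 ≤ q.2.2}
  f0_nonneg : ∀ (r w F : ℝ), 0 ≤ f0 r w F
  f0_periodic : ∀ (r w F : ℝ), f0 (r + 1) w F = f0 r w F
  f0_supp : ∃ C : ℝ, ∀ (r w F : ℝ), f0 r w F ≠ 0 → |w| ≤ C ∧ F ≤ C
  lam0_C1 : ContDiff ℝ 1 lam0
  psi_C1 : ContDiff ℝ 1 psi
  mu0_C2 : ContDiff ℝ 2 mu0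
  phi0_C2 : ContDiff ℝ 2 phi0
  lam0_periodic : ∀ r : ℝ, lam0 (r + 1) = lam0 r
  mu0_periodic : ∀ r : ℝ, mu0 (r + 1) = mu0 r
  phi0_periodic : ∀ r : ℝ, phi0 (r + 1) = phi0 r
  psi_periodic : ∀ r : ℝ, psi (r + 1) = psi r
  /-- The constraint (E3) holds at `t = 1`. -/
  constraint : ∀ r : ℝ, deriv mu0 r = -(4 * π) * Real.exp (lam0 r + mu0 r) *
    (π * (∫ w : ℝ, ∫ F in Ioi (0 : ℝ), w * f0 r w F)
      - Real.exp (-(lam0 r + mu0 r)) * psi r * deriv phi0 r)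

/-- A solution attains the initial data `(f0, lam0, mu0, phi0, psi)` at `t = 1`. -/
def AttainsData (f : ℝ → ℝ → ℝ → ℝ → ℝ) (lam mu phi : ℝ → ℝ → ℝ)
    (f0 : ℝ → ℝ → ℝ → ℝ) (lam0 mu0 phi0 psi : ℝ → ℝ) : Prop :=
  (∀ (r w F : ℝ), f 1 r w F = f0 r w F) ∧ (∀ r : ℝ, lam 1 r = lam0 r) ∧
    (∀ r : ℝ, mu 1 r = mu0 r) ∧ (∀ r : ℝ, phi 1 r = phi0 r) ∧
    (∀ r : ℝ, pt phi 1 r = psi r)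

/-- A left-maximal regular solution on `(T,1]` attaining the given data at `t = 1`:
it admits no extension to a regular solution on `(T',1]` with `0 ≤ T' < T`. -/
def IsLeftMaximalSolution (k : ℝ) (f : ℝ → ℝ → ℝ → ℝ → ℝ) (lam mu phi : ℝ → ℝ → ℝ)
    (T : ℝ) (f0 : ℝ → ℝ → ℝ → ℝ) (lam0 mu0 phi0 psi : ℝ → ℝ) : Prop :=
  IsRegularSolution k f lam mu phi (Ioc T 1) ∧
  AttainsData f lam mu phi f0 lam0 mu0 phi0 psi ∧
  ∀ T' : ℝ, 0 ≤ T' → T' < T →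
    ¬ ∃ (f' : ℝ → ℝ → ℝ → ℝ → ℝ) (lam' mu' phi' : ℝ → ℝ → ℝ),
      IsRegularSolution k f' lam' mu' phi' (Ioc T' 1) ∧
      AttainsData f' lam' mu' phi' f0 lam0 mu0 phi0 psi ∧
      (∀ t ∈ Ioc T 1, ∀ (r w F : ℝ), f' t r w F = f t r w F) ∧
      (∀ t ∈ Ioc T 1, ∀ r : ℝ, lam' t r = lam t r ∧ mu' t r = mu t r ∧ phi' t r = phi t r)
/-- Slice derivative in the first coordinate. -/
private lemma sliceT {G : ℝ × ℝ → ℝ} {G' : ℝ × ℝ →L[ℝ] ℝ} {p : ℝ × ℝ}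
    (h : HasFDerivAt G G' p) : HasDerivAt (fun s => G (s, p.2)) (G' (1, 0)) p.1 := by
  exact
    h.comp_hasDerivAt p.1 ((hasDerivAt_id p.1).prodMk (hasDerivAt_const p.1 p.2))

/-- Slice derivative in the second coordinate. -/
private lemma sliceR {G : ℝ × ℝ → ℝ} {G' : ℝ × ℝ →L[ℝ] ℝ} {p : ℝ × ℝ}
    (h : HasFDerivAt G G' p) : HasDerivAt (fun y => G (p.1, y)) (G' (0, 1)) p.2 := by
  exact
    h.comp_hasDerivAt p.2 ((hasDerivAt_const p.2 p.1).prodMk (hasDerivAt_id p.2))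

/-- The key pointwise algebraic identity. -/
private lemma algKey (pp k t s e1 e2 e3 e4 e5 e6 R P A B M φt φr Lt Mt Lr Mr : ℝ)
    (r1 : e1 * e3 = 1) (r2 : e4 = e3 * e2) (r3 : e5 = e1 * e1) (r4 : e6 = e2 * e2)
    (r5 : s * t = 1)
    (hW : e6 * B - e5 * A - e5 * (Lt - Mt + 2 * s) * φt - e6 * (Lr - Mr) * φr = 0)
    (hE1 : e5 * (2 * t * Lt + 1) + k = 8 * pp * t ^ 2 * R)
    (hE2 : e5 * (2 * t * Mt - 1) - k = 8 * pp * t ^ 2 * P) :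
    (e1 * (A - (e4 * (Mt - Lt) * φr + e4 * M)) + e2 * (M - (e4 * (Mr - Lr) * φr + e4 * B))
       = e3 * (k * s - 4 * pp * t * (R - P)) * (φt - e4 * φr) - e1 * s * (φt + e4 * φr)) ∧
    (e1 * (A + (e4 * (Mt - Lt) * φr + e4 * M)) - e2 * (M + (e4 * (Mr - Lr) * φr + e4 * B))
       = -(e1 * s) * (φt - e4 * φr) + e3 * (k * s - 4 * pp * t * (R - P)) * (φt + e4 * φr)) := by
  constructor
  · linear_combination (((-1)*e3)) * hW + ((1/2)*e2*e3^2*s*φr + (-1/2)*e1*e3^2*s*φt) * hE1 - ((1/2)*e2*e3^2*s*φr + (-1/2)*e1*e3^2*s*φt) * hE2 +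
      (1*e3*s*k*φt + 4*e3*t^2*s*pp*P*φt + (-4)*e3*t^2*s*pp*R*φt + (-1)*e2*φr*Mt + 1*e2*φr*Lt + (-1)*e2*M + 1*e2*t*s*φr*Mt + (-1)*e2*t*s*φr*Lt + 1*e1*φt*Mt + (-1)*e1*φt*Lt + (-1)*e1*A + (-1)*e1*s*φt + (-1)*e1*t*s*φt*Mt + 1*e1*t*s*φt*Lt + (-1)*e1*e2*e3*s*φr + 1*e1*e2*e3*t*s*φr*Mt + (-1)*e1*e2*e3*t*s*φr*Lt + 1*e1^2*e3*s*φt + (-1)*e1^2*e3*t*s*φt*Mt + 1*e1^2*e3*t*s*φt*Lt) * r1 + (1*e3*s*k*φr + 4*e3*t*pp*P*φr + (-4)*e3*t*pp*R*φr + (-1)*e2*φr*Mr + 1*e2*φr*Lr + (-1)*e2*B + (-1)*e1*φr*Mt + 1*e1*φr*Lt + (-1)*e1*M + 1*e1*s*φr) * r2 + (1*e3*φt*Mt + (-1)*e3*φt*Lt + (-1)*e3*A + (-2)*e3*s*φt + (-1)*e2*e3^2*s*φr + 1*e2*e3^2*t*s*φr*Mt + (-1)*e2*e3^2*t*s*φr*Lt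 + 1*e1*e3^2*s*φt + (-1)*e1*e3^2*t*s*φt*Mt + 1*e1*e3^2*t*s*φt*Lt) * r3 +
      (1*e3*φr*Mr + (-1)*e3*φr*Lr + 1*e3*B) * r4 + (4*e3*t*pp*P*φt + (-4)*e3*t*pp*R*φt + 1*e2*φr*Mt + (-1)*e2*φr*Lt + (-4)*e2*e3^2*t*pp*P*φr + 4*e2*e3^2*t*pp*R*φr + (-1)*e1*φt*Mt + 1*e1*φt*Lt) * r5
  · linear_combination (((-1)*e3)) * hW + ((-1/2)*e2*e3^2*s*φr + (-1/2)*e1*e3^2*s*φt) * hE1 - ((-1/2)*e2*e3^2*s*φr + (-1/2)*e1*e3^2*s*φt) * hE2 +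
      (1*e3*s*k*φt + 4*e3*t^2*s*pp*P*φt + (-4)*e3*t^2*s*pp*R*φt + 1*e2*φr*Mt + (-1)*e2*φr*Lt + 1*e2*M + (-1)*e2*t*s*φr*Mt + 1*e2*t*s*φr*Lt + 1*e1*φt*Mt + (-1)*e1*φt*Lt + (-1)*e1*A + (-1)*e1*s*φt + (-1)*e1*t*s*φt*Mt + 1*e1*t*s*φt*Lt + 1*e1*e2*e3*s*φr + (-1)*e1*e2*e3*t*s*φr*Mt + 1*e1*e2*e3*t*s*φr*Lt + 1*e1^2*e3*s*φt + (-1)*e1^2*e3*t*s*φt*Mt + 1*e1^2*e3*t*s*φt*Lt) * r1 + ((-1)*e3*s*k*φr + (-4)*e3*t*pp*P*φr + 4*e3*t*pp*R*φr + (-1)*e2*φr*Mr + 1*e2*φr*Lr + (-1)*e2*B + 1*e1*φr*Mt + (-1)*e1*φr*Lt + 1*e1*M + (-1)*e1*s*φr) * r2 + (1*e3*φt*Mt + (-1)*e3*φt*Lt + (-1)*e3*A + (-2)*e3*s*φt + 1*e2*e3^2*s*φr + (-1)*e2*e3^2*t*s*φr*Mt + 1*e2*e3^2*t*s*φr*Lt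 + 1*e1*e3^2*s*φt + (-1)*e1*e3^2*t*s*φt*Mt + 1*e1*e3^2*t*s*φt*Lt) * r3 +
      (1*e3*φr*Mr + (-1)*e3*φr*Lr + 1*e3*B) * r4 + (4*e3*t*pp*P*φt + (-4)*e3*t*pp*R*φt + (-1)*e2*φr*Mt + 1*e2*φr*Lt + 4*e2*e3^2*t*pp*P*φr + (-4)*e2*e3^2*t*pp*R*φr + (-1)*e1*φt*Mt + 1*e1*φt*Lt) * r5


/-- Lemma 2.2, second part: on an open subset of `(0,∞) × ℝ` where
the wave equation (W) and the field equations (E1), (E2) hold, the quantities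
`X₂ = φ̇ − e^{μ−λ}φ′` and `Y₂ = φ̇ + e^{μ−λ}φ′` satisfy
`D⁺X₂ = e^{μ}[k/t − 4πt(ρ−p)]X₂ − (e^{−μ}/t)Y₂` and
`D⁻Y₂ = −(e^{−μ}/t)X₂ + e^{μ}[k/t − 4πt(ρ−p)]Y₂`. -/
theorem stmt2 (k : ℝ) (hk : k = -1 ∨ k = 0 ∨ k = 1)
    (U : Set (ℝ × ℝ)) (hU : IsOpen U) (hUpos : ∀ q ∈ U, 0 < q.1)
    (f : ℝ → ℝ → ℝ → ℝ → ℝ) (lam mu phi : ℝ → ℝ → ℝ)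
    (hlam : ContDiffOn ℝ 1 (fun q : ℝ × ℝ => lam q.1 q.2) U)
    (hmu : ContDiffOn ℝ 1 (fun q : ℝ × ℝ => mu q.1 q.2) U)
    (hphi : ContDiffOn ℝ 2 (fun q : ℝ × ℝ => phi q.1 q.2) U)
    (hW : ∀ q ∈ U,
      Real.exp (-(2 * lam q.1 q.2)) * prr phi q.1 q.2
        - Real.exp (-(2 * mu q.1 q.2)) * ptt phi q.1 q.2
        - Real.exp (-(2 * mu q.1 q.2)) * (pt lam q.1 q.2 - pt mu q.1 q.2 + 2 / q.1)
            * pt phi q.1 q.2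
        - Real.exp (-(2 * lam q.1 q.2)) * (pr lam q.1 q.2 - pr mu q.1 q.2)
            * pr phi q.1 q.2 = 0)
    (hE1 : ∀ q ∈ U,
      Real.exp (-(2 * mu q.1 q.2)) * (2 * q.1 * pt lam q.1 q.2 + 1) + k
        = 8 * π * q.1 ^ 2 * rho f lam mu phi q.1 q.2)
    (hE2 : ∀ q ∈ U,
      Real.exp (-(2 * mu q.1 q.2)) * (2 * q.1 * pt mu q.1 q.2 - 1) - k
        = 8 * π * q.1 ^ 2 * pres f lam mu phi q.1 q.2) :
    let X2 : ℝ → ℝ → ℝ := fun t r => pt phi t r - Real.exp (mu t r - lam t r) * pr phi t r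
    let Y2 : ℝ → ℝ → ℝ := fun t r => pt phi t r + Real.exp (mu t r - lam t r) * pr phi t r
    ∀ q ∈ U,
      (Real.exp (-(mu q.1 q.2)) * pt X2 q.1 q.2 + Real.exp (-(lam q.1 q.2)) * pr X2 q.1 q.2
        = Real.exp (mu q.1 q.2) * (k / q.1
            - 4 * π * q.1 * (rho f lam mu phi q.1 q.2 - pres f lam mu phi q.1 q.2))
              * X2 q.1 q.2
          - Real.exp (-(mu q.1 q.2)) / q.1 * Y2 q.1 q.2) ∧
      (Real.exp (-(mu q.1 q.2)) * pt Y2 q.1 q.2 - Real.exp (-(lam q.1 q.2)) * pr Y2 q.1 q.2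
        = -(Real.exp (-(mu q.1 q.2)) / q.1) * X2 q.1 q.2
          + Real.exp (mu q.1 q.2) * (k / q.1
              - 4 * π * q.1 * (rho f lam mu phi q.1 q.2 - pres f lam mu phi q.1 q.2))
                * Y2 q.1 q.2) := by
  intro X2 Y2 q hq
  obtain ⟨t, r⟩ := q
  have ht0 : 0 < t := hUpos (t, r) hq
  have ht : t ≠ 0 := ne_of_gt ht0
  have hU' : U ∈ nhds (t, r) := hU.mem_nhds hq
  have hphiA : ContDiffAt ℝ 2 (fun p : ℝ × ℝ => phi p.1 p.2) (t, r) := hphi.contDiffAt hU'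
  have hlamA : ContDiffAt ℝ 1 (fun p : ℝ × ℝ => lam p.1 p.2) (t, r) := hlam.contDiffAt hU'
  have hmuA : ContDiffAt ℝ 1 (fun p : ℝ × ℝ => mu p.1 p.2) (t, r) := hmu.contDiffAt hU'
  -- eventual differentiability of the uncurried phi
  have hPev : ∀ᶠ p : ℝ × ℝ in nhds (t, r),
      DifferentiableAt ℝ (fun p : ℝ × ℝ => phi p.1 p.2) p := by
    filter_upwards [hphiA.eventually (by norm_num)] with p hp
    exact hp.differentiableAt (by norm_num)
  have hptev : ∀ᶠ p : ℝ × ℝ in nhds (t, r),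
      pt phi p.1 p.2 = fderiv ℝ (fun p : ℝ × ℝ => phi p.1 p.2) p (1, 0) := by
    filter_upwards [hPev] with p hp
    exact (sliceT hp.hasFDerivAt).deriv
  have hprev : ∀ᶠ p : ℝ × ℝ in nhds (t, r),
      pr phi p.1 p.2 = fderiv ℝ (fun p : ℝ × ℝ => phi p.1 p.2) p (0, 1) := by
    filter_upwards [hPev] with p hp
    exact (sliceR hp.hasFDerivAt).deriv
  -- second derivative
  set P2 : ℝ × ℝ → ℝ := fun p : ℝ × ℝ => phi p.1 p.2 with hP2
  set f2 := fderiv ℝ (fderiv ℝ P2) (t, r) with hf2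
  have hGv : ∀ v : ℝ × ℝ, HasFDerivAt (fun q => fderiv ℝ P2 q v) (f2.flip v) (t, r) := by
    intro v
    have hfd : HasFDerivAt (fderiv ℝ P2) f2 (t, r) :=
      ((hphiA.fderiv_right (m := 1) (by norm_num)).differentiableAt (by norm_num)).hasFDerivAt
    simpa using hfd.clm_apply (hasFDerivAt_const v (t, r))
  have htendT : Tendsto (fun s : ℝ => ((s, r) : ℝ × ℝ)) (nhds t) (nhds (t, r)) :=
    (continuous_id.prodMk continuous_const).tendsto t
  have htendR : Tendsto (fun y : ℝ => ((t, y) : ℝ × ℝ)) (nhds r) (nhds (t, r)) :=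
    (continuous_const.prodMk continuous_id).tendsto r
  -- the four second-order slice derivatives
  have hT : HasDerivAt (fun s => pt phi s r) (f2 (1, 0) (1, 0)) t := by
    have hev : (fun s => pt phi s r) =ᶠ[nhds t] (fun s => fderiv ℝ P2 (s, r) (1, 0)) := by
      filter_upwards [htendT.eventually hptev] with s hs using hs
    simpa using HasDerivAt.congr_of_eventuallyEq (sliceT (p := (t, r)) (hGv (1, 0))) hev
  have hmixT : HasDerivAt (fun s => pr phi s r) (f2 (1, 0) (0, 1)) t := by
    have hev : (fun s => pr phi s r) =ᶠ[nhds t] (fun s => fderiv ℝ P2 (s, r) (0, 1)) := by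
      filter_upwards [htendT.eventually hprev] with s hs using hs
    simpa using HasDerivAt.congr_of_eventuallyEq (sliceT (p := (t, r)) (hGv (0, 1))) hev
  have hmixR : HasDerivAt (fun y => pt phi t y) (f2 (0, 1) (1, 0)) r := by
    have hev : (fun y => pt phi t y) =ᶠ[nhds r] (fun y => fderiv ℝ P2 (t, y) (1, 0)) := by
      filter_upwards [htendR.eventually hptev] with y hy using hy
    simpa using HasDerivAt.congr_of_eventuallyEq (sliceR (p := (t, r)) (hGv (1, 0))) hev
  have hR : HasDerivAt (fun y => pr phi t y) (f2 (0, 1) (0, 1)) r := by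
    have hev : (fun y => pr phi t y) =ᶠ[nhds r] (fun y => fderiv ℝ P2 (t, y) (0, 1)) := by
      filter_upwards [htendR.eventually hprev] with y hy using hy
    simpa using HasDerivAt.congr_of_eventuallyEq (sliceR (p := (t, r)) (hGv (0, 1))) hev
  have hptt : ptt phi t r = f2 (1, 0) (1, 0) := hT.deriv
  have hprr : prr phi t r = f2 (0, 1) (0, 1) := hR.deriv
  have hsym : f2 (1, 0) (0, 1) = f2 (0, 1) (1, 0) :=
    hphiA.isSymmSndFDerivAt (by norm_num) _ _
  -- first-order slice derivatives of lam and mu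
  have hlamT : HasDerivAt (fun s => lam s r) (pt lam t r) t := by
    have h := sliceT (p := (t, r)) (hlamA.differentiableAt (by norm_num)).hasFDerivAt
    have he : pt lam t r = fderiv ℝ (fun p : ℝ × ℝ => lam p.1 p.2) (t, r) (1, 0) := h.deriv
    rw [he]; exact h
  have hmuT : HasDerivAt (fun s => mu s r) (pt mu t r) t := by
    have h := sliceT (p := (t, r)) (hmuA.differentiableAt (by norm_num)).hasFDerivAt
    have he : pt mu t r = fderiv ℝ (fun p : ℝ × ℝ => mu p.1 p.2) (t, r) (1, 0) := h.deriv
    rw [he]; exact h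
  have hlamR : HasDerivAt (fun y => lam t y) (pr lam t r) r := by
    have h := sliceR (p := (t, r)) (hlamA.differentiableAt (by norm_num)).hasFDerivAt
    have he : pr lam t r = fderiv ℝ (fun p : ℝ × ℝ => lam p.1 p.2) (t, r) (0, 1) := h.deriv
    rw [he]; exact h
  have hmuR : HasDerivAt (fun y => mu t y) (pr mu t r) r := by
    have h := sliceR (p := (t, r)) (hmuA.differentiableAt (by norm_num)).hasFDerivAt
    have he : pr mu t r = fderiv ℝ (fun p : ℝ × ℝ => mu p.1 p.2) (t, r) (0, 1) := h.deriv
    rw [he]; exact h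
  -- derivatives of the exponential factor
  have hexpT : HasDerivAt (fun s => Real.exp (mu s r - lam s r))
      (Real.exp (mu t r - lam t r) * (pt mu t r - pt lam t r)) t := (hmuT.sub hlamT).exp
  have hexpR : HasDerivAt (fun y => Real.exp (mu t y - lam t y))
      (Real.exp (mu t r - lam t r) * (pr mu t r - pr lam t r)) r := (hmuR.sub hlamR).exp
  -- derivatives of X2 and Y2
  have hptX2 : pt X2 t r = f2 (1, 0) (1, 0)
      - (Real.exp (mu t r - lam t r) * (pt mu t r - pt lam t r) * pr phi t r
        + Real.exp (mu t r - lam t r) * (f2 (1, 0) (0, 1))) :=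
    (hT.sub (hexpT.mul hmixT)).deriv
  have hprX2 : pr X2 t r = f2 (0, 1) (1, 0)
      - (Real.exp (mu t r - lam t r) * (pr mu t r - pr lam t r) * pr phi t r
        + Real.exp (mu t r - lam t r) * (f2 (0, 1) (0, 1))) :=
    (hmixR.sub (hexpR.mul hR)).deriv
  have hptY2 : pt Y2 t r = f2 (1, 0) (1, 0)
      + (Real.exp (mu t r - lam t r) * (pt mu t r - pt lam t r) * pr phi t r
        + Real.exp (mu t r - lam t r) * (f2 (1, 0) (0, 1))) :=
    (hT.add (hexpT.mul hmixT)).deriv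
  have hprY2 : pr Y2 t r = f2 (0, 1) (1, 0)
      + (Real.exp (mu t r - lam t r) * (pr mu t r - pr lam t r) * pr phi t r
        + Real.exp (mu t r - lam t r) * (f2 (0, 1) (0, 1))) :=
    (hmixR.add (hexpR.mul hR)).deriv
  rw [← hsym] at hprX2 hprY2
  -- the field equations at (t, r)
  have hW' := hW (t, r) hq
  have hE1' := hE1 (t, r) hq
  have hE2' := hE2 (t, r) hq
  simp only at hW' hE1' hE2'
  rw [hptt, hprr, div_eq_mul_inv] at hW'
  -- algebraic relations between the exponentials
  have r1 : Real.exp (-(mu t r)) * Real.exp (mu t r) = 1 := by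
    rw [← Real.exp_add]; simp
  have r2 : Real.exp (mu t r - lam t r) = Real.exp (mu t r) * Real.exp (-(lam t r)) := by
    rw [← Real.exp_add, sub_eq_add_neg]
  have r3 : Real.exp (-(2 * mu t r)) = Real.exp (-(mu t r)) * Real.exp (-(mu t r)) := by
    rw [← Real.exp_add]; congr 1; ring
  have r4 : Real.exp (-(2 * lam t r)) = Real.exp (-(lam t r)) * Real.exp (-(lam t r)) := by
    rw [← Real.exp_add]; congr 1; ring
  have r5 : t⁻¹ * t = 1 := inv_mul_cancel₀ ht
  have key := algKey π k t t⁻¹ (Real.exp (-(mu t r))) (Real.exp (-(lam t r)))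
    (Real.exp (mu t r)) (Real.exp (mu t r - lam t r)) (Real.exp (-(2 * mu t r)))
    (Real.exp (-(2 * lam t r))) (rho f lam mu phi t r) (pres f lam mu phi t r)
    (f2 (1, 0) (1, 0)) (f2 (0, 1) (0, 1)) (f2 (1, 0) (0, 1))
    (pt phi t r) (pr phi t r) (pt lam t r) (pt mu t r) (pr lam t r) (pr mu t r)
    r1 r2 r3 r4 r5 hW' hE1' hE2'
  constructor
  · show Real.exp (-(mu t r)) * pt X2 t r + Real.exp (-(lam t r)) * pr X2 t r = _
    rw [hptX2, hprX2, div_eq_mul_inv, div_eq_mul_inv]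
    exact key.1
  · show Real.exp (-(mu t r)) * pt Y2 t r - Real.exp (-(lam t r)) * pr Y2 t r = _
    rw [hptY2, hprY2, div_eq_mul_inv, div_eq_mul_inv]
    exact key.2
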